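/- For symmetric positive definite n×n matrices Λ and Σ and any vector v, vᵀ(I - Λ(Λ+Σ)⁻¹)Λv ≤ (vᵀΛv)(vᵀΣv)/(vᵀΛv + vᵀΣv). -/

import Mathlib

open Matrix

private lemma dot_symm {n : ℕ} (A : Matrix (Fin n) (Fin n) ℝ) (hA : Aᵀ = A)
    (x y : Fin n → ℝ) : x ⬝ᵥ A *ᵥ y = y ⬝ᵥ A *ᵥ x := by
  rw [Matrix.dotProduct_mulVec, ← Matrix.mulVec_transpose, hA, dotProduct_comm]

/-- for symmetric positive definite `n×n` matrices `Λ, Sig` and any nonzero `v`,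
`vᵀ(I - Λ(Λ+Sig)⁻¹)Λ v ≤ (vᵀΛv)(vᵀSigv)/(vᵀΛv + vᵀSigv)`. -/
theorem posterior_variance_bound {n : ℕ} (Λ Sig : Matrix (Fin n) (Fin n) ℝ)
    (hΛ : Λ.PosDef) (hSig : Sig.PosDef) (v : Fin n → ℝ) (hv : v ≠ 0) :
    v ⬝ᵥ ((1 - Λ * (Λ + Sig)⁻¹) * Λ) *ᵥ v ≤
      (v ⬝ᵥ Λ *ᵥ v) * (v ⬝ᵥ Sig *ᵥ v) / (v ⬝ᵥ Λ *ᵥ v + v ⬝ᵥ Sig *ᵥ v) := by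
  set S := Λ + Sig with hSdef
  have hS : S.PosDef := hΛ.add hSig
  have hdet : IsUnit S.det := isUnit_iff_ne_zero.2 hS.det_pos.ne'
  have hSS : S * S⁻¹ = 1 := Matrix.mul_nonsing_inv S hdet
  have hSS' : S⁻¹ * S = 1 := Matrix.nonsing_inv_mul S hdet
  set a := v ⬝ᵥ Λ *ᵥ v with ha
  set b := v ⬝ᵥ Sig *ᵥ v with hb
  have hapos : 0 < a := by simpa using hΛ.dotProduct_mulVec_pos hv
  have hbpos : 0 < b := by simpa using hSig.dotProduct_mulVec_pos hv
  set u := S⁻¹ *ᵥ (Sig *ᵥ v) with hu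
  set c := v ⬝ᵥ Sig *ᵥ u with hc
  -- matrix identity : (1 - Λ S⁻¹) Λ = Sig - Sig S⁻¹ Sig
  have hmat : (1 - Λ * S⁻¹) * Λ = Sig - Sig * S⁻¹ * Sig := by
    have h0 : (Λ + Sig) * S⁻¹ = 1 := by rw [← hSdef, hSS]
    rw [add_mul] at h0
    have h1 : 1 - Λ * S⁻¹ = Sig * S⁻¹ := by rw [← h0]; exact add_sub_cancel_left _ _
    have h2 : Λ = S - Sig := (add_sub_cancel_right Λ Sig).symm
    rw [h1, h2, Matrix.mul_sub, Matrix.mul_assoc, Matrix.mul_assoc, hSS', Matrix.mul_one]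
  have hlhs : v ⬝ᵥ ((1 - Λ * S⁻¹) * Λ) *ᵥ v = b - c := by
    rw [hmat, Matrix.sub_mulVec, dotProduct_sub, hb, hc, hu]
    congr 2
    rw [Matrix.mul_assoc, ← Matrix.mulVec_mulVec, ← Matrix.mulVec_mulVec]
  rw [hlhs]
  -- key facts about u
  have hSu : S *ᵥ u = Sig *ᵥ v := by
    rw [hu, Matrix.mulVec_mulVec, hSS, Matrix.one_mulVec]
  have hvSu : v ⬝ᵥ S *ᵥ u = b := by rw [hSu, hb]
  have huSv : u ⬝ᵥ S *ᵥ v = b := by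
    rw [dot_symm S hS.isHermitian.eq u v]; exact hvSu
  have huSu : u ⬝ᵥ S *ᵥ u = c := by
    rw [hSu, hc]; exact dot_symm Sig hSig.isHermitian.eq u v
  have hvSv : v ⬝ᵥ S *ᵥ v = a + b := by
    rw [hSdef, Matrix.add_mulVec, dotProduct_add, ha, hb]
  set t : ℝ := b / (a + b) with ht
  set w : Fin n → ℝ := t • v - u with hw
  have hwpos : 0 ≤ w ⬝ᵥ S *ᵥ w := by simpa using hS.posSemidef.dotProduct_mulVec_nonneg w
  have hexp : w ⬝ᵥ S *ᵥ w = t * t * (a + b) - 2 * t * b + c := by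
    rw [hw, Matrix.mulVec_sub, Matrix.mulVec_smul, dotProduct_sub, sub_dotProduct,
      sub_dotProduct, smul_dotProduct, smul_dotProduct, dotProduct_smul, dotProduct_smul,
      hvSv, hvSu, huSv, huSu]
    simp only [smul_eq_mul]
    ring
  rw [hexp, ht] at hwpos
  have habpos : 0 < a + b := by linarith
  have e : b / (a + b) * (b / (a + b)) * (a + b) - 2 * (b / (a + b)) * b + c
      = c - b * b / (a + b) := by field_simp; ring
  rw [e] at hwpos
  have e2 : a * b / (a + b) = b - b * b / (a + b) := by field_simp; ring
  rw [e2]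
  linarith
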